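/- Let 0 < α < 1 and let w : ℕ → (0,∞) satisfy w(k) = k^α + v(k) where v(k) = o(k^α) as k → ∞. Then for every λ > 0 the series ∑_{k=1}^∞ ∏_{j=0}^{k−1} w(j)/(λ + w(j)) converges. -/

import Mathlib

open Filter Asymptotics

/-- If `w k = k^α + v k` with `0 < α < 1` and `v k = o(k^α)`, then for every
`λ > 0` the series `∑_{k=1}^∞ ∏_{j=0}^{k-1} w j / (λ + w j)` converges. -/
theorem statement2
    (α : ℝ) (hα0 : 0 < α) (hα1 : α < 1)
    (w v : ℕ → ℝ) (hw : ∀ k, 0 < w k)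
    (hwv : ∀ k, w k = (k : ℝ) ^ α + v k)
    (hv : v =o[atTop] fun k : ℕ => (k : ℝ) ^ α)
    (lam : ℝ) (hlam : 0 < lam) :
    Summable (fun k : ℕ => ∏ j ∈ Finset.range (k + 1), w j / (lam + w j)) := by
  -- Step 1: eventually lam/(3 j^α) ≤ lam/(lam + w j)
  have h2 : ∀ᶠ j : ℕ in atTop, ‖v j‖ ≤ 1 / 2 * ‖(j : ℝ) ^ α‖ := hv.def (by norm_num)
  have h3 : ∀ᶠ j : ℕ in atTop, lam ≤ (j : ℝ) ^ α :=
    ((tendsto_rpow_atTop hα0).comp tendsto_natCast_atTop_atTop).eventually_ge_atTop lam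
  have key : ∀ᶠ j : ℕ in atTop, lam / (3 * (j : ℝ) ^ α) ≤ lam / (lam + w j) := by
    filter_upwards [h2, h3, eventually_ge_atTop 1] with j hj2 hj3 hj1
    have hjpos : (0 : ℝ) < (j : ℝ) ^ α :=
      Real.rpow_pos_of_pos (by exact_mod_cast hj1) α
    have hvle : |v j| ≤ 1 / 2 * (j : ℝ) ^ α := by
      simpa [Real.norm_eq_abs, abs_of_nonneg hjpos.le] using hj2
    have hwle : w j ≤ 2 * (j : ℝ) ^ α := by
      have := (abs_le.mp hvle).2
      rw [hwv j]; linarith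
    have hd : (0 : ℝ) < lam + w j := by have := hw j; linarith
    apply div_le_div_of_nonneg_left hlam.le hd
    linarith
  obtain ⟨N₀, hN₀⟩ := eventually_atTop.1 key
  set N := N₀ + 1 with hNdef
  have hN : ∀ j, N ≤ j → lam / (3 * (j : ℝ) ^ α) ≤ lam / (lam + w j) := fun j hj =>
    hN₀ j (le_trans (Nat.le_succ N₀) hj)
  -- Step 2: lower bound on the sum
  have hSum : ∀ k : ℕ, 2 * N ≤ k →
      lam / 6 * (k : ℝ) ^ (1 - α) ≤ ∑ j ∈ Finset.range (k + 1), lam / (lam + w j) := by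
    intro k hk
    have hNk : N ≤ k := le_trans (Nat.le_mul_of_pos_left N (by norm_num)) hk
    have hkpos : (0 : ℝ) < (k : ℝ) := by
      have : 1 ≤ k := le_trans (Nat.le_add_left 1 N₀) hNk
      exact_mod_cast this
    have hkapos : (0 : ℝ) < (k : ℝ) ^ α := Real.rpow_pos_of_pos hkpos α
    have step1 : ∑ j ∈ Finset.Icc N k, lam / (lam + w j) ≤
        ∑ j ∈ Finset.range (k + 1), lam / (lam + w j) := by
      apply Finset.sum_le_sum_of_subset_of_nonneg
      · intro j hj
        simp only [Finset.mem_Icc] at hj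
        simp only [Finset.mem_range]
        omega
      · intro j _ _
        have := hw j
        positivity
    have step2 : ∑ j ∈ Finset.Icc N k, lam / (3 * (k : ℝ) ^ α) ≤
        ∑ j ∈ Finset.Icc N k, lam / (lam + w j) := by
      apply Finset.sum_le_sum
      intro j hj
      simp only [Finset.mem_Icc] at hj
      refine le_trans ?_ (hN j hj.1)
      apply div_le_div_of_nonneg_left hlam.le
      · have hjpos : (0 : ℝ) < (j : ℝ) ^ α := by
          have : 1 ≤ j := le_trans (Nat.le_add_left 1 N₀) hj.1
          exact Real.rpow_pos_of_pos (by exact_mod_cast this) α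
        positivity
      · have : (j : ℝ) ^ α ≤ (k : ℝ) ^ α :=
          Real.rpow_le_rpow (by positivity) (by exact_mod_cast hj.2) hα0.le
        linarith
    have hcard : ∑ j ∈ Finset.Icc N k, lam / (3 * (k : ℝ) ^ α) =
        (k + 1 - N : ℕ) * (lam / (3 * (k : ℝ) ^ α)) := by
      rw [Finset.sum_const, Nat.card_Icc, nsmul_eq_mul]
    have hcast : ((k + 1 - N : ℕ) : ℝ) = (k : ℝ) + 1 - N := by
      have : N ≤ k + 1 := le_trans hNk (Nat.le_succ k)
      push_cast [Nat.cast_sub this]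
      ring
    have hhalf : (k : ℝ) / 2 ≤ ((k + 1 - N : ℕ) : ℝ) := by
      rw [hcast]
      have : (2 * N : ℝ) ≤ k := by exact_mod_cast hk
      linarith
    have hfinal : lam / 6 * (k : ℝ) ^ (1 - α) ≤
        ((k + 1 - N : ℕ) : ℝ) * (lam / (3 * (k : ℝ) ^ α)) := by
      have hrw : (k : ℝ) ^ (1 - α) = (k : ℝ) / (k : ℝ) ^ α := by
        rw [Real.rpow_sub hkpos, Real.rpow_one]
      rw [hrw]
      have h1 : lam / 6 * ((k : ℝ) / (k : ℝ) ^ α) =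
          ((k : ℝ) / 2) * (lam / (3 * (k : ℝ) ^ α)) := by
        field_simp
        ring
      rw [h1]
      apply mul_le_mul_of_nonneg_right hhalf
      positivity
    calc lam / 6 * (k : ℝ) ^ (1 - α)
        ≤ ((k + 1 - N : ℕ) : ℝ) * (lam / (3 * (k : ℝ) ^ α)) := hfinal
      _ = ∑ j ∈ Finset.Icc N k, lam / (3 * (k : ℝ) ^ α) := hcard.symm
      _ ≤ ∑ j ∈ Finset.Icc N k, lam / (lam + w j) := step2
      _ ≤ ∑ j ∈ Finset.range (k + 1), lam / (lam + w j) := step1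
  -- Step 3: eventually 2 log k ≤ lam/6 * k^(1-α)
  have hlog : ∀ᶠ k : ℕ in atTop, 2 * Real.log k ≤ lam / 6 * (k : ℝ) ^ (1 - α) := by
    have hlo : Real.log =o[atTop] fun x : ℝ => x ^ (1 - α) :=
      isLittleO_log_rpow_atTop (by linarith)
    have hbd : ∀ᶠ x : ℝ in atTop, ‖Real.log x‖ ≤ lam / 12 * ‖x ^ (1 - α)‖ :=
      hlo.def (by positivity)
    have := tendsto_natCast_atTop_atTop (R := ℝ) |>.eventually (hbd.and (eventually_ge_atTop 1))
    filter_upwards [this] with k hk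
    obtain ⟨hk1, hk2⟩ := hk
    have hkpos : (0 : ℝ) < (k : ℝ) := lt_of_lt_of_le zero_lt_one hk2
    have hlognn : 0 ≤ Real.log (k : ℝ) := Real.log_nonneg hk2
    have hrnn : (0 : ℝ) ≤ (k : ℝ) ^ (1 - α) := Real.rpow_nonneg hkpos.le _
    rw [Real.norm_eq_abs, Real.norm_eq_abs, abs_of_nonneg hlognn, abs_of_nonneg hrnn] at hk1
    linarith
  -- Step 4: conclude by comparison with k^(-2)
  apply summable_of_isBigO_nat (g := fun k : ℕ => (k : ℝ) ^ (-2 : ℝ))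
    (Real.summable_nat_rpow.mpr (by norm_num))
  rw [isBigO_iff]
  refine ⟨1, ?_⟩
  filter_upwards [hlog, eventually_ge_atTop (2 * N), eventually_ge_atTop 1]
    with k hklog hk2N hk1
  have hkpos : (0 : ℝ) < (k : ℝ) := by exact_mod_cast hk1
  have hprodnn : 0 ≤ ∏ j ∈ Finset.range (k + 1), w j / (lam + w j) := by
    apply Finset.prod_nonneg
    intro j _
    have := hw j
    positivity
  have hprodle : ∏ j ∈ Finset.range (k + 1), w j / (lam + w j) ≤
      Real.exp (-∑ j ∈ Finset.range (k + 1), lam / (lam + w j)) := by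
    rw [← Finset.sum_neg_distrib, Real.exp_sum]
    apply Finset.prod_le_prod
    · intro j _
      have := hw j
      positivity
    · intro j _
      have hwj := hw j
      have hd : (0 : ℝ) < lam + w j := by linarith
      have h1 : w j / (lam + w j) = 1 - lam / (lam + w j) := by
        field_simp
        ring
      rw [h1]
      have := Real.add_one_le_exp (-(lam / (lam + w j)))
      linarith
  have hexp : Real.exp (-∑ j ∈ Finset.range (k + 1), lam / (lam + w j)) ≤
      Real.exp (-(2 * Real.log k)) := by
    apply Real.exp_le_exp.mpr
    have := hSum k hk2N
    linarith
  have hexpeq : Real.exp (-(2 * Real.log k)) = (k : ℝ) ^ (-2 : ℝ) := by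
    rw [Real.rpow_def_of_pos hkpos]
    ring_nf
  have hrpos : (0 : ℝ) < (k : ℝ) ^ (-2 : ℝ) := Real.rpow_pos_of_pos hkpos _
  rw [Real.norm_eq_abs, Real.norm_eq_abs, abs_of_nonneg hprodnn, abs_of_nonneg hrpos.le,
    one_mul]
  calc ∏ j ∈ Finset.range (k + 1), w j / (lam + w j)
      ≤ Real.exp (-∑ j ∈ Finset.range (k + 1), lam / (lam + w j)) := hprodle
    _ ≤ Real.exp (-(2 * Real.log k)) := hexp
    _ = (k : ℝ) ^ (-2 : ℝ) := hexpeq
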